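/- Let f, g : A → B be morphisms of cocommutative Hopf algebras over a field k. Then the equalizer of f and g in the category of cocommutative Hopf algebras is the Hopf subalgebra Eq(f,g) = {x ∈ A | x₁ ⊗ f(x₂) = x₁ ⊗ g(x₂)} with its inclusion into A; in particular Eq(f,g) is closed under Δ, multiplication, unit, and antipode, and every element of it satisfies f(x) = g(x). -/

import Mathlib

open TensorProduct

section Conv

variable {k : Type*} [CommSemiring k] {C : Type*} [AddCommMonoid C] [Module k C]
  [Coalgebra k C] {M : Type*} [Semiring M] [Algebra k M]

open Coalgebra

/-- Convolution product of linear maps from a coalgebra to an algebra. -/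
noncomputable def myconv (u v : C →ₗ[k] M) : C →ₗ[k] M :=
  LinearMap.mul' k M ∘ₗ TensorProduct.map u v ∘ₗ Coalgebra.comul

/-- Convolution unit. -/
noncomputable def cunit : C →ₗ[k] M := Algebra.linearMap k M ∘ₗ Coalgebra.counit

lemma cunit_apply (x : C) :
    (cunit (k := k) (C := C) (M := M)) x = algebraMap k M (Coalgebra.counit x) := rfl

lemma myconv_repr (u v : C →ₗ[k] M) {x : C} {ι : Type*} (r : Coalgebra.Repr k x ι) :
    myconv u v x = ∑ i ∈ r.index, u (r.left i) * v (r.right i) := by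
  simp only [myconv, LinearMap.comp_apply, ← r.eq, map_sum, TensorProduct.map_tmul,
    LinearMap.mul'_apply]

lemma myconv_cunit_left (u : C →ₗ[k] M) : myconv cunit u = u := by
  apply LinearMap.ext; intro x
  rw [myconv_repr _ _ (ℛ k x)]
  have h := congrArg (TensorProduct.lid k M)
    (Coalgebra.sum_counit_tmul_map_eq (R := k) u x (repr := ℛ k x))
  simp only [map_sum, TensorProduct.lid_tmul, one_smul] at h
  calc ∑ i ∈ (ℛ k x).index, cunit ((ℛ k x).left i) * u ((ℛ k x).right i)
      = ∑ i ∈ (ℛ k x).index, Coalgebra.counit ((ℛ k x).left i) • u ((ℛ k x).right i) := by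
        simp [cunit_apply, Algebra.smul_def]
    _ = u x := h

lemma myconv_cunit_right (u : C →ₗ[k] M) : myconv u cunit = u := by
  apply LinearMap.ext; intro x
  rw [myconv_repr _ _ (ℛ k x)]
  have h := congrArg (TensorProduct.rid k M)
    (Coalgebra.sum_map_tmul_counit_eq (R := k) u x (repr := ℛ k x))
  simp only [map_sum, TensorProduct.rid_tmul, one_smul] at h
  calc ∑ i ∈ (ℛ k x).index, u ((ℛ k x).left i) * cunit ((ℛ k x).right i)
      = ∑ i ∈ (ℛ k x).index, Coalgebra.counit ((ℛ k x).right i) • u ((ℛ k x).left i) := by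
        simp [cunit_apply, Algebra.smul_def, ← Algebra.commutes]
    _ = u x := h

lemma myconv_assoc (u v w : C →ₗ[k] M) : myconv (myconv u v) w = myconv u (myconv v w) := by
  apply LinearMap.ext; intro x
  have key := Coalgebra.sum_map_tmul_tmul_eq (R := k) u v w x (repr := ℛ k x)
    (a₁ := fun i => ℛ k ((ℛ k x).left i)) (a₂ := fun i => ℛ k ((ℛ k x).right i))
  apply_fun (LinearMap.mul' k M ∘ₗ LinearMap.lTensor M (LinearMap.mul' k M)) at key
  simp only [map_sum, LinearMap.comp_apply, LinearMap.lTensor_tmul, LinearMap.mul'_apply] at key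
  rw [myconv_repr _ _ (ℛ k x), myconv_repr _ _ (ℛ k x)]
  have l1 : ∀ i ∈ (ℛ k x).index, myconv u v ((ℛ k x).left i) * w ((ℛ k x).right i)
      = ∑ j ∈ (ℛ k ((ℛ k x).left i)).index,
        u ((ℛ k ((ℛ k x).left i)).left j) *
          (v ((ℛ k ((ℛ k x).left i)).right j) * w ((ℛ k x).right i)) := by
    intro i _
    rw [myconv_repr _ _ (ℛ k ((ℛ k x).left i)), Finset.sum_mul]
    simp [mul_assoc]
  have l2 : ∀ i ∈ (ℛ k x).index, u ((ℛ k x).left i) * myconv v w ((ℛ k x).right i)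
      = ∑ j ∈ (ℛ k ((ℛ k x).right i)).index,
        u ((ℛ k x).left i) *
          (v ((ℛ k ((ℛ k x).right i)).left j) * w ((ℛ k ((ℛ k x).right i)).right j)) := by
    intro i _
    rw [myconv_repr _ _ (ℛ k ((ℛ k x).right i)), Finset.mul_sum]
  rw [Finset.sum_congr rfl l1, Finset.sum_congr rfl l2]
  exact key.symm

lemma myconv_unique {u m w : C →ₗ[k] M} (h1 : myconv u m = cunit)
    (h2 : myconv m w = cunit) : u = w := by
  calc u = myconv u cunit := (myconv_cunit_right u).symm
    _ = myconv u (myconv m w) := by rw [h2]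
    _ = myconv (myconv u m) w := (myconv_assoc u m w).symm
    _ = myconv cunit w := by rw [h1]
    _ = w := myconv_cunit_left w

end Conv

section Hopf

variable {k : Type*} [CommSemiring k] {A B : Type*} [Semiring A] [Semiring B]
  [HopfAlgebra k A] [HopfAlgebra k B]

open Coalgebra HopfAlgebra

/-- A bialgebra morphism between Hopf algebras commutes with the antipode. -/
lemma bialghom_antipode (f : A →ₐc[k] B) :
    (f : A →ₗ[k] B) ∘ₗ antipode (R := k) = antipode (R := k) ∘ₗ (f : A →ₗ[k] B) := by
  apply myconv_unique (m := (f : A →ₗ[k] B))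
  · apply LinearMap.ext; intro x
    rw [myconv_repr _ _ (ℛ k x)]
    have : ∑ i ∈ (ℛ k x).index,
        ((f : A →ₗ[k] B) ∘ₗ antipode (R := k)) ((ℛ k x).left i) * (f : A →ₗ[k] B) ((ℛ k x).right i)
        = f (∑ i ∈ (ℛ k x).index, antipode (R := k) ((ℛ k x).left i) * (ℛ k x).right i) := by
      rw [map_sum]; simp [map_mul]
    rw [this, HopfAlgebra.sum_antipode_mul_eq_algebraMap_counit (ℛ k x), cunit_apply]
    exact AlgHomClass.commutes f _
  · apply LinearMap.ext; intro x
    let r' : Coalgebra.Repr k (f x) (A × A) :=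
      { index := (ℛ k x).index
        left := fun i => f ((ℛ k x).left i)
        right := fun i => f ((ℛ k x).right i)
        eq := by
          have h := CoalgHomClass.map_comp_comul_apply f x
          rw [← h, ← (ℛ k x).eq, map_sum]
          simp }
    have h := HopfAlgebra.sum_mul_antipode_eq_algebraMap_counit (R := k) r'
    rw [myconv_repr _ _ (ℛ k x)]
    simp only [LinearMap.comp_apply]
    calc ∑ i ∈ (ℛ k x).index,
        f ((ℛ k x).left i) * antipode (R := k) (f ((ℛ k x).right i))
        = algebraMap k B (Coalgebra.counit (f x)) := h
      _ = cunit x := by rw [CoalgHomClass.counit_comp_apply f x, cunit_apply]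

/-- In a cocommutative Hopf algebra, `Δ ∘ S = (S ⊗ S) ∘ Δ`. -/
lemma comul_antipode_cocomm
    (hcocA : ∀ x : A, (TensorProduct.comm k A A) (Coalgebra.comul (R := k) x) =
      Coalgebra.comul (R := k) x) :
    (Coalgebra.comul (R := k) (A := A)) ∘ₗ antipode (R := k)
      = TensorProduct.map (antipode (R := k)) (antipode (R := k)) ∘ₗ Coalgebra.comul := by
  let j1 : A →ₗ[k] A ⊗[k] A := (TensorProduct.mk k A A).flip 1
  let j2 : A →ₗ[k] A ⊗[k] A := TensorProduct.mk k A A 1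
  have h21 : myconv j2 j1 = Coalgebra.comul (R := k) := by
    apply LinearMap.ext; intro x
    rw [myconv_repr _ _ (ℛ k x)]
    have : (TensorProduct.comm k A A) (Coalgebra.comul (R := k) x)
        = ∑ i ∈ (ℛ k x).index, (ℛ k x).right i ⊗ₜ[k] (ℛ k x).left i := by
      rw [← (ℛ k x).eq, map_sum]; simp
    rw [← hcocA x, this]
    simp [j1, j2, Algebra.TensorProduct.tmul_mul_tmul]
  have h1S : myconv j1 (j1 ∘ₗ antipode (R := k)) = cunit := by
    apply LinearMap.ext; intro x
    rw [myconv_repr _ _ (ℛ k x)]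
    have : ∑ i ∈ (ℛ k x).index,
        j1 ((ℛ k x).left i) * (j1 ∘ₗ antipode (R := k)) ((ℛ k x).right i)
        = (∑ i ∈ (ℛ k x).index, (ℛ k x).left i * antipode (R := k) ((ℛ k x).right i)) ⊗ₜ[k] 1 := by
      rw [TensorProduct.sum_tmul]
      simp [j1, Algebra.TensorProduct.tmul_mul_tmul]
    rw [this, HopfAlgebra.sum_mul_antipode_eq_algebraMap_counit (ℛ k x), cunit_apply,
      Algebra.TensorProduct.algebraMap_apply]
  have h2S : myconv j2 (j2 ∘ₗ antipode (R := k)) = cunit := by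
    apply LinearMap.ext; intro x
    rw [myconv_repr _ _ (ℛ k x)]
    have : ∑ i ∈ (ℛ k x).index,
        j2 ((ℛ k x).left i) * (j2 ∘ₗ antipode (R := k)) ((ℛ k x).right i)
        = (1 : A) ⊗ₜ[k] (∑ i ∈ (ℛ k x).index, (ℛ k x).left i * antipode (R := k) ((ℛ k x).right i)) := by
      rw [TensorProduct.tmul_sum]
      simp [j2, Algebra.TensorProduct.tmul_mul_tmul]
    rw [this, HopfAlgebra.sum_mul_antipode_eq_algebraMap_counit (ℛ k x), cunit_apply,
      Algebra.TensorProduct.algebraMap_apply, Algebra.algebraMap_eq_smul_one,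
      TensorProduct.smul_tmul]
  have hW : myconv (j1 ∘ₗ antipode (R := k)) (j2 ∘ₗ antipode (R := k))
      = TensorProduct.map (antipode (R := k)) (antipode (R := k)) ∘ₗ Coalgebra.comul := by
    apply LinearMap.ext; intro x
    rw [myconv_repr _ _ (ℛ k x)]
    simp only [LinearMap.comp_apply, ← (ℛ k x).eq, map_sum, TensorProduct.map_tmul]
    simp [j1, j2, Algebra.TensorProduct.tmul_mul_tmul]
  have hSΔ : myconv ((Coalgebra.comul (R := k) (A := A)) ∘ₗ antipode (R := k))
      Coalgebra.comul = cunit := by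
    apply LinearMap.ext; intro x
    rw [myconv_repr _ _ (ℛ k x)]
    have : ∑ i ∈ (ℛ k x).index,
        ((Coalgebra.comul (R := k) (A := A)) ∘ₗ antipode (R := k)) ((ℛ k x).left i)
          * Coalgebra.comul ((ℛ k x).right i)
        = Coalgebra.comul (R := k)
          (∑ i ∈ (ℛ k x).index, antipode (R := k) ((ℛ k x).left i) * (ℛ k x).right i) := by
      rw [map_sum]
      simp [Bialgebra.comul_mul]
    rw [this, HopfAlgebra.sum_antipode_mul_eq_algebraMap_counit (ℛ k x), Bialgebra.comul_algebraMap, cunit_apply]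
  have hΔW : myconv (Coalgebra.comul (R := k) (A := A))
      (TensorProduct.map (antipode (R := k)) (antipode (R := k)) ∘ₗ Coalgebra.comul)
      = cunit := by
    rw [← hW, ← h21, myconv_assoc, ← myconv_assoc j1, h1S, myconv_cunit_left, h2S]
  exact myconv_unique hSΔ hΔW

end Hopf

set_option maxHeartbeats 1000000 in
set_option synthInstance.maxHeartbeats 200000 in
theorem stmt_11 {k A B : Type u} [Field k] [Ring A] [Ring B]
    [HopfAlgebra k A] [HopfAlgebra k B]
    (hcocA : ∀ x : A, (TensorProduct.comm k A A) (Coalgebra.comul (R := k) x) =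
      Coalgebra.comul (R := k) x)
    (hcocB : ∀ x : B, (TensorProduct.comm k B B) (Coalgebra.comul (R := k) x) =
      Coalgebra.comul (R := k) x)
    (f g : A →ₐc[k] B)
    (E : Set A)
    (hE : E = {x : A | LinearMap.lTensor A (f : A →ₗ[k] B) (Coalgebra.comul (R := k) x) =
      LinearMap.lTensor A (g : A →ₗ[k] B) (Coalgebra.comul (R := k) x)}) :
    (1 : A) ∈ E ∧
    (∀ x ∈ E, ∀ y ∈ E, x * y ∈ E) ∧
    (∀ x ∈ E, HopfAlgebra.antipode (R := k) x ∈ E) ∧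
    (∀ x ∈ E, Coalgebra.comul (R := k) x ∈
      Submodule.span k {z : A ⊗[k] A | ∃ a ∈ E, ∃ b ∈ E, z = a ⊗ₜ[k] b}) ∧
    (∀ x ∈ E, f x = g x) ∧
    (∀ (C : Type u) (_ : Ring C) (_ : HopfAlgebra k C),
      (∀ x : C, (TensorProduct.comm k C C) (Coalgebra.comul (R := k) x) =
        Coalgebra.comul (R := k) x) →
      ∀ h : C →ₐc[k] A, (∀ c : C, f (h c) = g (h c)) → ∀ c : C, h c ∈ E) := by
  have hEk : ∀ y : A, y ∈ E ↔
      LinearMap.lTensor A (f : A →ₗ[k] B) (Coalgebra.comul (R := k) y)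
        = LinearMap.lTensor A (g : A →ₗ[k] B) (Coalgebra.comul (R := k) y) := by
    intro y; rw [hE]; exact Iff.rfl
  set φ : A →ₗ[k] A ⊗[k] B :=
    LinearMap.lTensor A (f : A →ₗ[k] B) ∘ₗ Coalgebra.comul
      - LinearMap.lTensor A (g : A →ₗ[k] B) ∘ₗ Coalgebra.comul with hφ
  have hEφ : ∀ y : A, y ∈ E ↔ φ y = 0 := by
    intro y
    rw [hEk y, hφ]
    simp only [LinearMap.sub_apply, LinearMap.comp_apply, sub_eq_zero]
  -- multiplicativity of lTensor of an algebra map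
  have key_mul : ∀ (p : A →ₐc[k] B) (u v : A ⊗[k] A),
      LinearMap.lTensor A (p : A →ₗ[k] B) (u * v)
        = LinearMap.lTensor A (p : A →ₗ[k] B) u * LinearMap.lTensor A (p : A →ₗ[k] B) v := by
    intro p u v
    have heq : LinearMap.lTensor A (p : A →ₗ[k] B)
        = (Algebra.TensorProduct.map (AlgHom.id k A) (p : A →ₐ[k] B)).toLinearMap := by
      apply TensorProduct.ext'
      intro a b
      simp
    rw [heq]
    simp only [AlgHom.toLinearMap_apply]
    exact map_mul _ u v
  refine ⟨?_, ?_, ?_, ?_, ?_, ?_⟩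
  · -- 1 ∈ E
    rw [hEk]
    simp [Bialgebra.comul_one, Algebra.TensorProduct.one_def]
  · -- closed under multiplication
    intro x hx y hy
    rw [hEk] at hx hy ⊢
    rw [Bialgebra.comul_mul, key_mul f, key_mul g, hx, hy]
  · -- closed under antipode
    intro x hx
    rw [hEk] at hx ⊢
    have h1 : Coalgebra.comul (R := k) (HopfAlgebra.antipode (R := k) x)
        = TensorProduct.map (HopfAlgebra.antipode (R := k)) (HopfAlgebra.antipode (R := k))
            (Coalgebra.comul (R := k) x) :=
      LinearMap.congr_fun (comul_antipode_cocomm hcocA) x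
    have hcomm : ∀ (p : A →ₐc[k] B),
        LinearMap.lTensor A (p : A →ₗ[k] B) ∘ₗ
          TensorProduct.map (HopfAlgebra.antipode (R := k)) (HopfAlgebra.antipode (R := k))
        = TensorProduct.map (HopfAlgebra.antipode (R := k))
            (HopfAlgebra.antipode (R := k) (A := B)) ∘ₗ
            LinearMap.lTensor A (p : A →ₗ[k] B) := by
      intro p
      have hpb := fun b : A => LinearMap.congr_fun (bialghom_antipode p) b
      simp at hpb
      apply TensorProduct.ext'
      intro a b
      simp [hpb b]
    rw [h1, ← LinearMap.comp_apply, hcomm f, LinearMap.comp_apply, hx,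
      ← LinearMap.comp_apply, ← hcomm g, LinearMap.comp_apply]
  · -- comul lands in the span
    intro x hx
    have hxE : LinearMap.lTensor A (f : A →ₗ[k] B) (Coalgebra.comul (R := k) x)
        = LinearMap.lTensor A (g : A →ₗ[k] B) (Coalgebra.comul (R := k) x) := (hEk x).mp hx
    rw [hEφ] at hx
    set Es : Submodule k A := LinearMap.ker φ with hEsdef
    have natA : ∀ (p : A →ₗ[k] B),
        LinearMap.lTensor A (LinearMap.lTensor A p) ∘ₗ
          (TensorProduct.assoc k A A A).toLinearMap
        = (TensorProduct.assoc k A A B).toLinearMap ∘ₗ LinearMap.lTensor (A ⊗[k] A) p := by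
      intro p
      apply TensorProduct.ext_threefold
      intro a b c
      simp
    have commLR : ∀ (p : A →ₗ[k] B),
        LinearMap.lTensor (A ⊗[k] A) p
            (LinearMap.rTensor A (Coalgebra.comul (R := k) (A := A))
              (Coalgebra.comul (R := k) x))
        = LinearMap.rTensor B (Coalgebra.comul (R := k) (A := A))
            (LinearMap.lTensor A p (Coalgebra.comul (R := k) x)) := by
      intro p
      calc LinearMap.lTensor (A ⊗[k] A) p
            (LinearMap.rTensor A (Coalgebra.comul (R := k) (A := A))
              (Coalgebra.comul (R := k) x))
          = TensorProduct.map (Coalgebra.comul (R := k) (A := A)) p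
              (Coalgebra.comul (R := k) x) :=
            LinearMap.congr_fun
              (LinearMap.lTensor_comp_rTensor (f := Coalgebra.comul (R := k) (A := A)) (g := p)) _
        _ = LinearMap.rTensor B (Coalgebra.comul (R := k) (A := A))
              (LinearMap.lTensor A p (Coalgebra.comul (R := k) x)) :=
            (LinearMap.congr_fun
              (LinearMap.rTensor_comp_lTensor (f := Coalgebra.comul (R := k) (A := A)) (g := p)) _).symm
    have stepA : LinearMap.lTensor A φ (Coalgebra.comul (R := k) x) = 0 := by
      have expand : LinearMap.lTensor A φ (Coalgebra.comul (R := k) x)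
          = LinearMap.lTensor A (LinearMap.lTensor A (f : A →ₗ[k] B))
              (LinearMap.lTensor A (Coalgebra.comul (R := k) (A := A))
                (Coalgebra.comul (R := k) x))
            - LinearMap.lTensor A (LinearMap.lTensor A (g : A →ₗ[k] B))
              (LinearMap.lTensor A (Coalgebra.comul (R := k) (A := A))
                (Coalgebra.comul (R := k) x)) := by
        rw [hφ, LinearMap.lTensor_sub, LinearMap.sub_apply,
          LinearMap.lTensor_comp, LinearMap.lTensor_comp, LinearMap.comp_apply,
          LinearMap.comp_apply]
      have nf := LinearMap.congr_fun (natA (f : A →ₗ[k] B))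
        (LinearMap.rTensor A (Coalgebra.comul (R := k) (A := A)) (Coalgebra.comul (R := k) x))
      have ng := LinearMap.congr_fun (natA (g : A →ₗ[k] B))
        (LinearMap.rTensor A (Coalgebra.comul (R := k) (A := A)) (Coalgebra.comul (R := k) x))
      simp only [LinearMap.comp_apply, LinearEquiv.coe_coe] at nf ng
      rw [expand, ← Coalgebra.coassoc_apply x, nf, ng,
        commLR (f : A →ₗ[k] B), commLR (g : A →ₗ[k] B), hxE, sub_self]
    have natB : LinearMap.rTensor A φ ∘ₗ (TensorProduct.comm k A A).toLinearMap
        = (TensorProduct.comm k A (A ⊗[k] B)).toLinearMap ∘ₗ LinearMap.lTensor A φ := by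
      apply TensorProduct.ext'
      intro a b
      simp
    have stepB : LinearMap.rTensor A φ (Coalgebra.comul (R := k) x) = 0 := by
      have nb := LinearMap.congr_fun natB (Coalgebra.comul (R := k) x)
      simp only [LinearMap.comp_apply, LinearEquiv.coe_coe] at nb
      conv_lhs => rw [← hcocA x]
      rw [nb, stepA]
      exact LinearEquiv.map_zero _
    have hexact := LinearMap.exact_subtype_ker_map φ
    have e1 := Module.Flat.lTensor_exact (R := k) A hexact
    obtain ⟨v, hv⟩ := (e1 (Coalgebra.comul (R := k) x)).mp stepA
    have hcomm2 : LinearMap.rTensor A φ (LinearMap.lTensor A Es.subtype v)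
        = LinearMap.lTensor (A ⊗[k] B) Es.subtype (LinearMap.rTensor (↥Es) φ v) := by
      calc LinearMap.rTensor A φ (LinearMap.lTensor A Es.subtype v)
          = TensorProduct.map φ Es.subtype v :=
            LinearMap.congr_fun (LinearMap.rTensor_comp_lTensor (f := φ) (g := Es.subtype)) v
        _ = LinearMap.lTensor (A ⊗[k] B) Es.subtype (LinearMap.rTensor (↥Es) φ v) :=
            (LinearMap.congr_fun (LinearMap.lTensor_comp_rTensor (f := φ) (g := Es.subtype)) v).symm
    have hv0 : LinearMap.rTensor (↥Es) φ v = 0 := by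
      have hinj : Function.Injective (LinearMap.lTensor (A ⊗[k] B) Es.subtype) :=
        Module.Flat.lTensor_preserves_injective_linearMap Es.subtype
          (Submodule.injective_subtype Es)
      apply hinj
      rw [map_zero, ← hcomm2, hv, stepB]
    have e2 := Module.Flat.rTensor_exact (R := k) (↥Es) hexact
    obtain ⟨w, hw⟩ := (e2 v).mp hv0
    have final : ∀ u : (↥Es) ⊗[k] (↥Es),
        LinearMap.lTensor A Es.subtype (LinearMap.rTensor (↥Es) Es.subtype u) ∈
          Submodule.span k {z : A ⊗[k] A | ∃ a ∈ E, ∃ b ∈ E, z = a ⊗ₜ[k] b} := by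
      intro u
      induction u using TensorProduct.induction_on with
      | zero => simp
      | tmul a b =>
        simp only [LinearMap.rTensor_tmul, LinearMap.lTensor_tmul, Submodule.coe_subtype]
        exact Submodule.subset_span ⟨(a : A), (hEφ a).mpr a.2, (b : A), (hEφ b).mpr b.2, rfl⟩
      | add u1 u2 h1 h2 =>
        rw [map_add, map_add]
        exact Submodule.add_mem _ h1 h2
    rw [← hv, ← hw]
    exact final w
  · -- f = g on E
    intro x hx
    rw [hEk] at hx
    have aux : ∀ (p : A →ₗ[k] B),
        (TensorProduct.lid k B) (LinearMap.rTensor B (Coalgebra.counit (R := k) (A := A))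
          (LinearMap.lTensor A p (Coalgebra.comul (R := k) x))) = p x := by
      intro p
      have e3 : LinearMap.rTensor B (Coalgebra.counit (R := k) (A := A))
            (LinearMap.lTensor A p (Coalgebra.comul (R := k) x))
          = LinearMap.lTensor k p
              (LinearMap.rTensor A (Coalgebra.counit (R := k) (A := A))
                (Coalgebra.comul (R := k) x)) := by
        calc LinearMap.rTensor B (Coalgebra.counit (R := k) (A := A))
              (LinearMap.lTensor A p (Coalgebra.comul (R := k) x))
            = TensorProduct.map (Coalgebra.counit (R := k) (A := A)) p
                (Coalgebra.comul (R := k) x) :=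
              LinearMap.congr_fun
                (LinearMap.rTensor_comp_lTensor (f := Coalgebra.counit (R := k) (A := A)) (g := p)) _
          _ = _ :=
              (LinearMap.congr_fun
                (LinearMap.lTensor_comp_rTensor (f := Coalgebra.counit (R := k) (A := A)) (g := p)) _).symm
      rw [e3, Coalgebra.rTensor_counit_comul]
      simp
    have hfg := congrArg (fun t => (TensorProduct.lid k B)
      (LinearMap.rTensor B (Coalgebra.counit (R := k) (A := A)) t)) hx
    rw [aux (f : A →ₗ[k] B), aux (g : A →ₗ[k] B)] at hfg
    simpa using hfg
  · -- universal property
    intro C _ _ _ h hfg c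
    rw [hEk]
    have hΔ : Coalgebra.comul (R := k) (h c)
        = TensorProduct.map (h : C →ₗ[k] A) (h : C →ₗ[k] A) (Coalgebra.comul (R := k) c) :=
      (CoalgHomClass.map_comp_comul_apply h c).symm
    rw [hΔ]
    induction Coalgebra.comul (R := k) c using TensorProduct.induction_on with
    | zero => simp
    | tmul a b => simp [hfg b]
    | add u1 u2 h1 h2 => rw [map_add, map_add, map_add, h1, h2]
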